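/- Let n ≥ 1. For the quaternion-type subspace 2̄ := {U ∈ Cl_{p,q} : involute U = U ∧ reverse U = −U}, the real dimension satisfies (as an equality of real numbers) 4 · (Module.finrank ℝ 2̄) = 2^n − 2·(√2)^n · cos(πn/4), i.e. dim 2̄ = 2^{n−2} − 2^{(n−2)/2} cos(πn/4). -/

import Mathlib

open CliffordAlgebra

/-- The quadratic form of signature `(p,q)` on `Fin (p+q) → ℝ`:
`Q(x) = ∑_{i<p} x_i² − ∑_{p≤i<n} x_i²`. -/
noncomputable def Qpq (p q : ℕ) : QuadraticForm ℝ (Fin (p + q) → ℝ) :=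
  QuadraticMap.weightedSumSquares ℝ (fun i : Fin (p + q) => if (i : ℕ) < p then (1 : ℝ) else -1)

/-- The quaternion-type subspace: elements `U` with `involute U = U` and `reverse U = -U`. -/
noncomputable def quatType2 (p q : ℕ) : Submodule ℝ (CliffordAlgebra (Qpq p q)) where
  carrier := {U | involute U = U ∧ reverse U = -U}
  add_mem' := by
    rintro a b ⟨ha1, ha2⟩ ⟨hb1, hb2⟩
    exact ⟨by simp [ha1, hb1]; all_goals abel, by simp [ha2, hb2]; all_goals abel⟩
  zero_mem' := by simp
  smul_mem' := by
    rintro c a ⟨h1, h2⟩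
    exact ⟨by rw [map_smul, h1]; all_goals module, by rw [map_smul, h2]; all_goals module⟩

namespace Aux
variable (p q : ℕ)

noncomputable def w (i : Fin (p + q)) : ℝ := if (i : ℕ) < p then (1 : ℝ) else -1

noncomputable def e (i : Fin (p + q)) : CliffordAlgebra (Qpq p q) :=
  ι (Qpq p q) (Pi.single i 1)

lemma Qpq_single (i : Fin (p + q)) : Qpq p q (Pi.single i 1) = w p q i := by
  rw [Qpq, QuadraticMap.weightedSumSquares_apply]
  rw [Finset.sum_eq_single i]
  · simp [w]
  · intro j _ hj; simp [Pi.single_apply, hj]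
  · simp

lemma ortho {i j : Fin (p + q)} (h : i ≠ j) :
    (Qpq p q).IsOrtho (Pi.single i 1) (Pi.single j 1) := by
  rw [QuadraticMap.isOrtho_def]
  rw [Qpq, QuadraticMap.weightedSumSquares_apply, QuadraticMap.weightedSumSquares_apply,
    QuadraticMap.weightedSumSquares_apply, ← Finset.sum_add_distrib]
  refine Finset.sum_congr rfl fun k _ => ?_
  by_cases hki : k = i <;> by_cases hkj : k = j <;>
    simp_all [Pi.single_apply] <;> ring

lemma e_sq (i : Fin (p + q)) : e p q i * e p q i = algebraMap ℝ _ (w p q i) := by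
  rw [e, ι_sq_scalar, Qpq_single]

lemma e_anticomm {i j : Fin (p + q)} (h : i ≠ j) :
    e p q i * e p q j = -(e p q j * e p q i) :=
  ι_mul_ι_comm_of_isOrtho (ortho p q h)



abbrev F := Finset (Fin (p + q)) → ℝ

noncomputable def sgn (i : Fin (p + q)) (S : Finset (Fin (p + q))) : ℝ :=
  (-1 : ℝ) ^ (S.filter (· < i)).card

lemma sgn_sq (i : Fin (p + q)) (S : Finset (Fin (p + q))) : sgn p q i S * sgn p q i S = 1 := by
  rw [sgn, ← pow_add, ← two_mul, pow_mul, neg_one_sq, one_pow]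

lemma sgn_insert {j : Fin (p + q)} (i : Fin (p + q)) {S : Finset (Fin (p + q))} (h : j ∉ S) :
    sgn p q i (insert j S) = (if j < i then -1 else 1) * sgn p q i S := by
  rw [sgn, sgn, Finset.filter_insert]
  split_ifs with hj
  · rw [Finset.card_insert_of_notMem (fun hc => h (Finset.mem_of_mem_filter _ hc)), pow_succ]
    ring
  · rw [one_mul]

lemma sgn_erase {j : Fin (p + q)} (i : Fin (p + q)) {S : Finset (Fin (p + q))} (h : j ∈ S) :
    sgn p q i (S.erase j) = (if j < i then -1 else 1) * sgn p q i S := by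
  have : S = insert j (S.erase j) := (Finset.insert_erase h).symm
  rw [this, sgn_insert p q i (Finset.notMem_erase j S), Finset.erase_insert
    (Finset.notMem_erase j S)]
  split_ifs <;> ring

/-- the `i`-th generator acting on the Fock space -/
noncomputable def m (i : Fin (p + q)) : F p q →ₗ[ℝ] F p q where
  toFun f T := if i ∈ T then sgn p q i T * f (T.erase i) else w p q i * sgn p q i T * f (insert i T)
  map_add' f g := by funext T; by_cases h : i ∈ T <;> simp [h] <;> ring
  map_smul' c f := by funext T; by_cases h : i ∈ T <;> simp [h] <;> ring

lemma m_apply (i : Fin (p + q)) (f : F p q) (T : Finset (Fin (p + q))) :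
    m p q i f T = if i ∈ T then sgn p q i T * f (T.erase i)
      else w p q i * sgn p q i T * f (insert i T) := rfl

lemma m_m_same (i : Fin (p + q)) (f : F p q) : m p q i (m p q i f) = w p q i • f := by
  funext T
  by_cases h : i ∈ T
  · rw [m_apply, if_pos h, m_apply, if_neg (Finset.notMem_erase i T),
      Finset.insert_erase h, sgn_erase p q i h, if_neg (lt_irrefl i)]
    simp only [Pi.smul_apply, smul_eq_mul]
    linear_combination (w p q i * f T) * sgn_sq p q i T
  · rw [m_apply, if_neg h, m_apply, if_pos (Finset.mem_insert_self i T),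
      Finset.erase_insert h, sgn_insert p q i h, if_neg (lt_irrefl i)]
    simp only [Pi.smul_apply, smul_eq_mul]
    linear_combination (w p q i * f T) * sgn_sq p q i T

lemma sgn_toggle {i j : Fin (p + q)} (h : i ≠ j) (T : Finset (Fin (p + q))) :
    sgn p q j (if i ∈ T then T.erase i else insert i T)
      = (if i < j then -1 else 1) * sgn p q j T := by
  by_cases hi : i ∈ T
  · rw [if_pos hi, sgn_erase p q j hi]
  · rw [if_neg hi, sgn_insert p q j hi]

lemma m_m_anticomm {i j : Fin (p + q)} (h : i ≠ j) (f : F p q) :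
    m p q i (m p q j f) = - m p q j (m p q i f) := by
  funext T
  have h1 : sgn p q j (T.erase i) = (if i < j then -1 else 1) * sgn p q j T ∨ i ∉ T := by
    by_cases hi : i ∈ T
    · exact Or.inl (sgn_erase p q j hi)
    · exact Or.inr hi
  simp only [Pi.neg_apply]
  by_cases hi : i ∈ T <;> by_cases hj : j ∈ T
  · rw [m_apply, if_pos hi, m_apply, if_pos (Finset.mem_erase.2 ⟨h.symm, hj⟩),
      m_apply, if_pos hj, m_apply, if_pos (Finset.mem_erase.2 ⟨h, hi⟩),
      Finset.erase_right_comm, sgn_erase p q j hi, sgn_erase p q i hj]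
    rcases h.lt_or_gt with hlt | hlt <;>
      simp only [if_pos hlt, if_neg (not_lt_of_gt hlt)] <;> ring
  · rw [m_apply, if_pos hi, m_apply,
      if_neg (fun hc => hj (Finset.mem_of_mem_erase hc)),
      m_apply, if_neg hj, m_apply, if_pos (Finset.mem_insert_of_mem hi),
      Finset.erase_insert_of_ne h.symm, sgn_erase p q j hi, sgn_insert p q i hj]
    rcases h.lt_or_gt with hlt | hlt <;>
      simp only [if_pos hlt, if_neg (not_lt_of_gt hlt)] <;> ring
  · rw [m_apply, if_neg hi, m_apply, if_pos (Finset.mem_insert_of_mem hj),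
      m_apply, if_pos hj, m_apply,
      if_neg (fun hc => hi (Finset.mem_of_mem_erase hc)),
      Finset.erase_insert_of_ne h, sgn_insert p q j hi, sgn_erase p q i hj]
    rcases h.lt_or_gt with hlt | hlt <;>
      simp only [if_pos hlt, if_neg (not_lt_of_gt hlt)] <;> ring
  · rw [m_apply, if_neg hi, m_apply,
      if_neg (fun hc => hj ((Finset.mem_insert.1 hc).resolve_left h.symm)),
      m_apply, if_neg hj, m_apply,
      if_neg (fun hc => hi ((Finset.mem_insert.1 hc).resolve_left h)),
      Finset.insert_comm, sgn_insert p q j hi, sgn_insert p q i hj]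
    rcases h.lt_or_gt with hlt | hlt <;>
      simp only [if_pos hlt, if_neg (not_lt_of_gt hlt)] <;> ring

noncomputable def θ : (Fin (p + q) → ℝ) →ₗ[ℝ] (F p q →ₗ[ℝ] F p q) where
  toFun v := ∑ i, v i • m p q i
  map_add' u v := by simp [add_smul, Finset.sum_add_distrib]
  map_smul' c v := by simp [smul_smul, Finset.smul_sum]

lemma θ_single (i : Fin (p + q)) : θ p q (Pi.single i 1) = m p q i := by
  show (∑ j, (Pi.single i (1:ℝ) : Fin (p + q) → ℝ) j • m p q j) = m p q i
  rw [Finset.sum_eq_single i]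
  · simp
  · intro j _ hj; simp [Pi.single_apply, hj]
  · simp

lemma m_mul_m_same (i : Fin (p + q)) :
    (m p q i * m p q i : Module.End ℝ (F p q)) = w p q i • 1 :=
  LinearMap.ext fun f => by
    rw [Module.End.mul_apply, m_m_same]; rfl

lemma m_mul_m_anticomm {i j : Fin (p + q)} (h : i ≠ j) :
    (m p q i * m p q j : Module.End ℝ (F p q)) + m p q j * m p q i = 0 :=
  LinearMap.ext fun f => by
    simp only [LinearMap.add_apply, Module.End.mul_apply, LinearMap.zero_apply,
      m_m_anticomm p q h (m p q i f)]
    rw [m_m_anticomm p q h]; abel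

lemma hθ (v : Fin (p + q) → ℝ) :
    θ p q v * θ p q v = algebraMap ℝ (Module.End ℝ (F p q)) (Qpq p q v) := by
  have hS : θ p q v * θ p q v = ∑ i, ∑ j, (v i * v j) • (m p q i * m p q j : Module.End ℝ (F p q)) := by
    show (∑ i, v i • m p q i) * (∑ j, v j • m p q j) = _
    rw [Finset.sum_mul_sum]
    refine Finset.sum_congr rfl fun i _ => Finset.sum_congr rfl fun j _ => ?_
    rw [smul_mul_assoc, mul_smul_comm, smul_smul]
  have hD : θ p q v * θ p q v = ∑ i, (v i * v i) • (m p q i * m p q i : Module.End ℝ (F p q)) := by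
    have h2 : (2:ℝ) • (θ p q v * θ p q v)
        = (2:ℝ) • ∑ i, (v i * v i) • (m p q i * m p q i : Module.End ℝ (F p q)) := by
      have hswap : θ p q v * θ p q v
          = ∑ i, ∑ j, (v j * v i) • (m p q j * m p q i : Module.End ℝ (F p q)) := by
        rw [hS]; exact Finset.sum_comm
      calc (2:ℝ) • (θ p q v * θ p q v)
          = (θ p q v * θ p q v) + (θ p q v * θ p q v) := two_smul ℝ _
        _ = ∑ i, ∑ j, ((v i * v j) • (m p q i * m p q j : Module.End ℝ (F p q))
              + (v j * v i) • (m p q j * m p q i)) := by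
            have hsplit : ∑ i, ∑ j, ((v i * v j) • (m p q i * m p q j : Module.End ℝ (F p q))
                  + (v j * v i) • (m p q j * m p q i))
                = (∑ i, ∑ j, (v i * v j) • (m p q i * m p q j : Module.End ℝ (F p q)))
                  + ∑ i, ∑ j, (v j * v i) • (m p q j * m p q i : Module.End ℝ (F p q)) := by
              rw [← Finset.sum_add_distrib]
              exact Finset.sum_congr rfl fun i _ => Finset.sum_add_distrib
            rw [hsplit, ← hS, ← hswap]
        _ = ∑ i, (2:ℝ) • ((v i * v i) • (m p q i * m p q i : Module.End ℝ (F p q))) := by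
            refine Finset.sum_congr rfl fun i _ => ?_
            rw [Finset.sum_eq_single i]
            · rw [two_smul]
            · intro j _ hj
              rw [mul_comm (v j) (v i), ← smul_add, m_mul_m_anticomm p q (Ne.symm hj), smul_zero]
            · intro hc; exact absurd (Finset.mem_univ i) hc
        _ = (2:ℝ) • ∑ i, (v i * v i) • (m p q i * m p q i : Module.End ℝ (F p q)) := by
            rw [Finset.smul_sum]
    have h3 : ((2:ℝ)⁻¹ * 2) • (θ p q v * θ p q v)
        = ((2:ℝ)⁻¹ * 2) • ∑ i, (v i * v i) • (m p q i * m p q i : Module.End ℝ (F p q)) := by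
      rw [mul_smul, mul_smul, h2]
    rw [show ((2:ℝ)⁻¹ * 2) = 1 by norm_num, one_smul, one_smul] at h3
    exact h3
  rw [hD]
  rw [Qpq, QuadraticMap.weightedSumSquares_apply, Algebra.algebraMap_eq_smul_one,
    Finset.sum_smul]
  refine Finset.sum_congr rfl fun i _ => ?_
  rw [m_mul_m_same, smul_smul, w, mul_comm, smul_eq_mul]

noncomputable def φ : CliffordAlgebra (Qpq p q) →ₐ[ℝ] Module.End ℝ (F p q) :=
  CliffordAlgebra.lift (Qpq p q) ⟨θ p q, hθ p q⟩

lemma φ_e (i : Fin (p + q)) : φ p q (e p q i) = m p q i := by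
  rw [φ, e, lift_ι_apply, θ_single]

noncomputable def δ (σ : Finset (Fin (p + q))) : F p q := Pi.single σ 1

lemma m_single_not_mem {i : Fin (p + q)} {σ : Finset (Fin (p + q))} (h : i ∉ σ) :
    m p q i (δ p q σ) = sgn p q i σ • δ p q (insert i σ) := by
  funext T
  rw [m_apply]
  simp only [δ, Pi.smul_apply, Pi.single_apply, smul_eq_mul]
  by_cases hi : i ∈ T
  · by_cases hT : T = insert i σ
    · have h1 : T.erase i = σ := by rw [hT, Finset.erase_insert h]
      rw [if_pos hi, if_pos h1, if_pos hT, hT, sgn_insert p q i h, if_neg (lt_irrefl i)]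
      ring
    · have h1 : T.erase i ≠ σ := fun hc => hT (by rw [← hc, Finset.insert_erase hi])
      rw [if_pos hi, if_neg h1, if_neg hT]; ring
  · have h1 : insert i T ≠ σ := fun hc => h (hc ▸ Finset.mem_insert_self i T)
    have h2 : T ≠ insert i σ := fun hc => hi (hc ▸ Finset.mem_insert_self i σ)
    rw [if_neg hi, if_neg h1, if_neg h2]; ring

lemma sgn_one {i : Fin (p + q)} {σ : Finset (Fin (p + q))} (h : ∀ j ∈ σ, i < j) :
    sgn p q i σ = 1 := by
  rw [sgn]
  have : σ.filter (· < i) = ∅ :=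
    Finset.filter_eq_empty_iff.2 fun {j} hj => not_lt_of_gt (h j hj)
  rw [this, Finset.card_empty, pow_zero]

noncomputable def eL (l : List (Fin (p + q))) : CliffordAlgebra (Qpq p q) :=
  (l.map (e p q)).prod

noncomputable def eS (σ : Finset (Fin (p + q))) : CliffordAlgebra (Qpq p q) :=
  eL p q (σ.sort (· ≤ ·))

lemma eL_nil : eL p q [] = 1 := rfl
lemma eL_cons (i : Fin (p + q)) (l : List (Fin (p + q))) :
    eL p q (i :: l) = e p q i * eL p q l := by
  rw [eL, eL, List.map_cons, List.prod_cons]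

lemma φ_eL_sorted : ∀ l : List (Fin (p + q)), l.Pairwise (· < ·) →
    φ p q (eL p q l) (δ p q ∅) = δ p q l.toFinset := by
  intro l
  induction l with
  | nil => intro _; simp [eL_nil, δ]
  | cons i l ih =>
    intro hs
    have hs' := hs.of_cons
    have hlt : ∀ j ∈ l, i < j := fun j hj => (List.pairwise_cons.1 hs).1 j hj
    have hnm : i ∉ l.toFinset := fun hc => lt_irrefl i (hlt i (List.mem_toFinset.1 hc))
    rw [eL_cons, map_mul, Module.End.mul_apply, φ_e, ih hs', m_single_not_mem p q hnm,
      sgn_one p q (fun j hj => hlt j (List.mem_toFinset.1 hj)), one_smul,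
      List.toFinset_cons]

lemma φ_eS (σ : Finset (Fin (p + q))) : φ p q (eS p q σ) (δ p q ∅) = δ p q σ := by
  rw [eS, φ_eL_sorted p q _ ((Finset.sortedLT_sort σ).pairwise), Finset.sort_toFinset]

lemma eS_indep : LinearIndependent ℝ (eS p q) := by
  have hb : LinearIndependent ℝ (δ p q) := by
    have := (Pi.basisFun ℝ (Finset (Fin (p + q)))).linearIndependent
    convert this using 1
    funext σ; rw [Pi.basisFun_apply]; rfl
  let E : CliffordAlgebra (Qpq p q) →ₗ[ℝ] F p q :=
    { toFun := fun U => φ p q U (δ p q ∅)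
      map_add' := fun a b => by simp
      map_smul' := fun c a => by simp }
  apply LinearIndependent.of_comp E
  have : (E ∘ eS p q) = δ p q := funext fun σ => φ_eS p q σ
  rw [this]; exact hb

lemma eL_sorted_eq_eS {l : List (Fin (p + q))} (hl : l.Pairwise (· < ·)) :
    eL p q l = eS p q l.toFinset := by
  rw [eS, (List.toFinset_sort (· ≤ ·) hl.nodup).2 (hl.imp fun h => h.le)]

lemma eS_empty : eS p q ∅ = 1 := by rw [eS, Finset.sort_empty, eL_nil]

lemma e_mul_eS_of_lt {j : Fin (p + q)} {σ : Finset (Fin (p + q))}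
    (h : ∀ k ∈ σ, j < k) : e p q j * eS p q σ = eS p q (insert j σ) := by
  have hj : j ∉ σ := fun hc => lt_irrefl j (h j hc)
  rw [eS, eS, Finset.sort_insert (· ≤ ·) (fun b hb => (h b hb).le) hj, eL_cons]

lemma key : ∀ l : List (Fin (p + q)), l.Pairwise (· < ·) → ∀ i : Fin (p + q),
    ∃ (c : ℝ) (σ : Finset (Fin (p + q))), σ ⊆ insert i l.toFinset ∧
      e p q i * eL p q l = c • eS p q σ := by
  intro l
  induction l with
  | nil =>
    intro _ i
    refine ⟨1, {i}, by simp, ?_⟩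
    rw [eL_nil, mul_one, one_smul, eS, Finset.sort_singleton, eL, List.map_singleton,
      List.prod_singleton]
  | cons j l ih =>
    intro hs i
    have hjl : ∀ k ∈ l, j < k := fun k hk => (List.pairwise_cons.1 hs).1 k hk
    rcases lt_trichotomy i j with hij | hij | hij
    · refine ⟨1, insert i (j :: l).toFinset, subset_rfl, ?_⟩
      have hsort : (i :: j :: l).Pairwise (· < ·) := by
        rw [List.pairwise_cons]
        exact ⟨fun b hb => by
          rcases List.mem_cons.1 hb with h1 | h1
          · exact h1 ▸ hij
          · exact hij.trans (hjl b h1), hs⟩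
      rw [one_smul, ← List.toFinset_cons, ← eL_sorted_eq_eS p q hsort]
      exact (eL_cons p q i (j :: l)).symm
    · refine ⟨w p q i, l.toFinset, ?_, ?_⟩
      · intro k hk
        simp only [List.toFinset_cons, Finset.mem_insert]
        tauto
      · subst hij
        rw [eL_cons, ← mul_assoc, e_sq, ← Algebra.smul_def,
          eL_sorted_eq_eS p q (List.pairwise_cons.1 hs).2]
    · obtain ⟨c, σ', hsub, heq⟩ := ih (List.pairwise_cons.1 hs).2 i
      have hσj : ∀ k ∈ σ', j < k := by
        intro k hk
        rcases Finset.mem_insert.1 (hsub hk) with h1 | h1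
        · exact h1 ▸ hij
        · exact hjl k (List.mem_toFinset.1 h1)
      refine ⟨-c, insert j σ', ?_, ?_⟩
      · rw [List.toFinset_cons, Finset.insert_comm]
        exact Finset.insert_subset_insert _ hsub
      · rw [eL_cons, ← mul_assoc, e_anticomm p q hij.ne', neg_mul, mul_assoc,
          heq, mul_smul_comm, e_mul_eS_of_lt p q hσj, neg_smul]

lemma e_mul_span {i : Fin (p + q)} {x : CliffordAlgebra (Qpq p q)}
    (hx : x ∈ Submodule.span ℝ (Set.range (eS p q))) :
    e p q i * x ∈ Submodule.span ℝ (Set.range (eS p q)) := by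
  induction hx using Submodule.span_induction with
  | mem y hy =>
    obtain ⟨σ, rfl⟩ := hy
    obtain ⟨c, τ, _, heq⟩ := key p q (σ.sort (· ≤ ·)) ((Finset.sortedLT_sort σ).pairwise) i
    rw [show eS p q σ = eL p q (σ.sort (· ≤ ·)) from rfl, heq]
    exact Submodule.smul_mem _ _ (Submodule.subset_span ⟨τ, rfl⟩)
  | zero => rw [mul_zero]; exact Submodule.zero_mem _
  | add y z _ _ hy hz => rw [mul_add]; exact Submodule.add_mem _ hy hz
  | smul c y _ hy => rw [mul_smul_comm]; exact Submodule.smul_mem _ _ hy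

lemma eL_mul_span : ∀ (l : List (Fin (p + q))) (x : CliffordAlgebra (Qpq p q)),
    x ∈ Submodule.span ℝ (Set.range (eS p q)) →
    eL p q l * x ∈ Submodule.span ℝ (Set.range (eS p q)) := by
  intro l
  induction l with
  | nil => intro x hx; rw [eL_nil, one_mul]; exact hx
  | cons i l ih =>
    intro x hx
    rw [eL_cons, mul_assoc]
    exact e_mul_span p q (ih x hx)

lemma top_span : ⊤ ≤ Submodule.span ℝ (Set.range (eS p q)) := by
  intro x hx
  clear hx
  induction x using CliffordAlgebra.induction with
  | algebraMap r =>
    rw [Algebra.algebraMap_eq_smul_one, ← eS_empty]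
    exact Submodule.smul_mem _ _ (Submodule.subset_span ⟨∅, rfl⟩)
  | ι v =>
    have hv : v = ∑ i, v i • (Pi.single i 1 : Fin (p + q) → ℝ) := by
      ext j
      rw [Finset.sum_apply]
      simp [Pi.single_apply]
    rw [hv, map_sum]
    refine Submodule.sum_mem _ fun i _ => ?_
    rw [map_smul]
    refine Submodule.smul_mem _ _ ?_
    have : ι (Qpq p q) (Pi.single i 1) = eS p q {i} := by
      rw [eS, Finset.sort_singleton, eL, List.map_singleton, List.prod_singleton]; rfl
    rw [this]
    exact Submodule.subset_span ⟨{i}, rfl⟩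
  | mul a b ha hb =>
    induction ha using Submodule.span_induction with
    | mem y hy =>
      obtain ⟨σ, rfl⟩ := hy
      exact eL_mul_span p q (σ.sort (· ≤ ·)) b hb
    | zero => rw [zero_mul]; exact Submodule.zero_mem _
    | add y z _ _ hy hz => rw [add_mul]; exact Submodule.add_mem _ hy hz
    | smul c y _ hy => rw [smul_mul_assoc]; exact Submodule.smul_mem _ _ hy
  | add a b ha hb => exact Submodule.add_mem _ ha hb

noncomputable def bS : Module.Basis (Finset (Fin (p + q))) ℝ (CliffordAlgebra (Qpq p q)) :=
  Module.Basis.mk (eS_indep p q) (top_span p q)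

lemma bS_apply (σ : Finset (Fin (p + q))) : bS p q σ = eS p q σ := Module.Basis.mk_apply _ _ _

lemma inv_eL (l : List (Fin (p + q))) :
    involute (eL p q l) = ((-1 : ℝ) ^ l.length) • eL p q l := by
  induction l with
  | nil => rw [eL_nil, map_one, List.length_nil, pow_zero, one_smul]
  | cons i l ih =>
    rw [eL_cons, map_mul, ih, e, involute_ι, ← e, List.length_cons, pow_succ,
      mul_neg_one, neg_smul, neg_mul, mul_smul_comm]

lemma eL_append (l₁ l₂ : List (Fin (p + q))) :
    eL p q (l₁ ++ l₂) = eL p q l₁ * eL p q l₂ := by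
  rw [eL, eL, eL, List.map_append, List.prod_append]

lemma eL_mul_e {i : Fin (p + q)} : ∀ l : List (Fin (p + q)), i ∉ l →
    eL p q l * e p q i = ((-1 : ℝ) ^ l.length) • (e p q i * eL p q l) := by
  intro l
  induction l with
  | nil => intro _; rw [eL_nil, one_mul, mul_one, List.length_nil, pow_zero, one_smul]
  | cons j l ih =>
    intro hi
    have hij : j ≠ i := fun hc => hi (hc ▸ List.mem_cons_self)
    have hi' : i ∉ l := fun hc => hi (List.mem_cons_of_mem j hc)
    rw [eL_cons, mul_assoc, ih hi', mul_smul_comm, ← mul_assoc,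
      e_anticomm p q hij, neg_mul, smul_neg, mul_assoc, List.length_cons,
      pow_succ, mul_neg_one, neg_smul, ← eL_cons]

lemma rev_eL : ∀ l : List (Fin (p + q)), l.Nodup →
    reverse (eL p q l) = ((-1 : ℝ) ^ (l.length.choose 2)) • eL p q l := by
  intro l
  induction l with
  | nil => intro _; rw [eL_nil, reverse.map_one, List.length_nil]; norm_num
  | cons i l ih =>
    intro hnd
    have hi : i ∉ l := (List.nodup_cons.1 hnd).1
    rw [eL_cons, reverse.map_mul, ih (List.nodup_cons.1 hnd).2, e, reverse_ι, ← e,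
      smul_mul_assoc, eL_mul_e p q l hi, smul_smul, ← pow_add, ← eL_cons,
      List.length_cons]
    congr 2
    rw [Nat.choose_succ_succ, Nat.choose_one_right, add_comm]

lemma inv_eS (σ : Finset (Fin (p + q))) :
    involute (eS p q σ) = ((-1 : ℝ) ^ σ.card) • eS p q σ := by
  rw [eS, inv_eL, Finset.length_sort]

lemma rev_eS (σ : Finset (Fin (p + q))) :
    reverse (eS p q σ) = ((-1 : ℝ) ^ (σ.card.choose 2)) • eS p q σ := by
  rw [eS, rev_eL p q _ (Finset.sort_nodup _ _), Finset.length_sort]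

lemma even_choose_of_mod4 {k : ℕ} (h : k % 4 = 0 ∨ k % 4 = 1) : Even (k.choose 2) := by
  obtain ⟨m, hm⟩ : ∃ m, k = 4 * m ∨ k = 4 * m + 1 := ⟨k / 4, by omega⟩
  rw [Nat.choose_two_right]
  rcases hm with rfl | rfl
  · have h1 : 4 * m * (4 * m - 1) = 2 * (2 * m * (4 * m - 1)) := by ring
    rw [h1, Nat.mul_div_cancel_left _ (by norm_num : 0 < 2)]
    exact ⟨m * (4 * m - 1), by ring⟩
  · have h1 : (4 * m + 1) * (4 * m + 1 - 1) = 2 * ((4 * m + 1) * (2 * m)) := by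
      simp; ring
    rw [h1, Nat.mul_div_cancel_left _ (by norm_num : 0 < 2)]
    exact ⟨(4 * m + 1) * m, by ring⟩

lemma odd_choose_of_mod4 {k : ℕ} (h : k % 4 = 2) : Odd (k.choose 2) := by
  obtain ⟨m, rfl⟩ : ∃ m, k = 4 * m + 2 := ⟨k / 4, by omega⟩
  rw [Nat.choose_two_right]
  have h1 : (4 * m + 2) * (4 * m + 2 - 1) = 2 * ((2 * m + 1) * (4 * m + 1)) := by
    simp; ring
  rw [h1, Nat.mul_div_cancel_left _ (by norm_num : 0 < 2)]
  exact ⟨4 * m ^ 2 + 3 * m, by ring⟩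


lemma neg_one_pow_card_of_mod4_two {k : ℕ} (h : k % 4 = 2) : ((-1 : ℝ)) ^ k = 1 :=
  Even.neg_one_pow (Nat.even_iff.2 (by omega))

lemma mem_quat_iff (U : CliffordAlgebra (Qpq p q)) :
    U ∈ quatType2 p q ↔ involute U = U ∧ reverse U = -U := Iff.rfl

lemma quat_eq_span :
    quatType2 p q
      = Submodule.span ℝ (eS p q '' {σ : Finset (Fin (p + q)) | σ.card % 4 = 2}) := by
  apply le_antisymm
  · intro U hU
    obtain ⟨hU1, hU2⟩ := (mem_quat_iff p q U).1 hU
    set c : Finset (Fin (p + q)) → ℝ := fun σ => (bS p q).repr U σ with hc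
    have hrepr : U = ∑ σ, c σ • bS p q σ := ((bS p q).sum_repr U).symm
    have hinv : ∀ σ : Finset (Fin (p + q)), (-1 : ℝ) ^ σ.card * c σ = c σ := by
      intro σ
      have : involute U = ∑ σ, ((-1 : ℝ) ^ σ.card * c σ) • bS p q σ := by
        rw [hrepr, map_sum]
        refine Finset.sum_congr rfl fun τ _ => ?_
        rw [map_smul, bS_apply, inv_eS, smul_smul, mul_comm, ← bS_apply]
      rw [hU1] at this
      have h2 := (bS p q).repr_sum_self (fun σ => (-1 : ℝ) ^ σ.card * c σ)
      rw [← this] at h2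
      exact (congrFun h2 σ).symm
    have hrev : ∀ σ : Finset (Fin (p + q)), (-1 : ℝ) ^ (σ.card.choose 2) * c σ = -c σ := by
      intro σ
      have : reverse U = ∑ σ, ((-1 : ℝ) ^ (σ.card.choose 2) * c σ) • bS p q σ := by
        rw [hrepr, map_sum]
        refine Finset.sum_congr rfl fun τ _ => ?_
        rw [map_smul, bS_apply, rev_eS, smul_smul, mul_comm, ← bS_apply]
      rw [hU2] at this
      have hneg : -U = ∑ σ, (-(c σ)) • bS p q σ := by
        rw [hrepr, ← Finset.sum_neg_distrib]
        exact Finset.sum_congr rfl fun τ _ => (neg_smul _ _).symm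
      rw [hneg] at this
      have h2 := (bS p q).repr_sum_self (fun σ => (-1 : ℝ) ^ (σ.card.choose 2) * c σ)
      rw [← this] at h2
      have h3 := (bS p q).repr_sum_self (fun σ => -(c σ))
      rw [h2] at h3
      exact congrFun h3 σ
    have hzero : ∀ σ : Finset (Fin (p + q)), σ.card % 4 ≠ 2 → c σ = 0 := by
      intro σ hne
      have h4 : σ.card % 4 = 0 ∨ σ.card % 4 = 1 ∨ σ.card % 4 = 3 := by omega
      rcases h4 with h4 | h4 | h4
      · have := hrev σ
        rw [Even.neg_one_pow (even_choose_of_mod4 (Or.inl h4))] at this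
        linarith
      · have := hrev σ
        rw [Even.neg_one_pow (even_choose_of_mod4 (Or.inr h4))] at this
        linarith
      · have := hinv σ
        rw [Odd.neg_one_pow (Nat.odd_iff.2 (by omega))] at this
        linarith
    rw [hrepr]
    refine Submodule.sum_mem _ fun σ _ => ?_
    by_cases hσ : σ.card % 4 = 2
    · refine Submodule.smul_mem _ _ (Submodule.subset_span ?_)
      exact ⟨σ, hσ, (bS_apply p q σ).symm⟩
    · rw [hzero σ hσ, zero_smul]
      exact Submodule.zero_mem _
  · rw [Submodule.span_le]
    rintro x ⟨σ, hσ, rfl⟩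
    rw [SetLike.mem_coe, mem_quat_iff]
    constructor
    · rw [inv_eS, neg_one_pow_card_of_mod4_two hσ, one_smul]
    · rw [rev_eS, Odd.neg_one_pow (odd_choose_of_mod4 hσ), neg_one_smul]



lemma finrank_quat : Module.finrank ℝ (quatType2 p q)
    = Fintype.card {σ : Finset (Fin (p + q)) // σ.card % 4 = 2} := by
  rw [quat_eq_span]
  have himg : eS p q '' {σ : Finset (Fin (p + q)) | σ.card % 4 = 2}
      = Set.range (fun t : {σ : Finset (Fin (p + q)) // σ.card % 4 = 2} => eS p q t.1) := by
    rw [show (fun t : {σ : Finset (Fin (p + q)) // σ.card % 4 = 2} => eS p q t.1)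
        = eS p q ∘ Subtype.val from rfl, Set.range_comp, Subtype.range_coe_subtype]
  rw [himg]
  exact finrank_span_eq_card ((eS_indep p q).comp Subtype.val Subtype.val_injective)

end Aux

lemma pointwise (k : ℕ) :
    (1 : ℝ) + (-1) ^ k - 2 * ((Complex.I) ^ k).re
      = if k % 4 = 2 then 4 else 0 := by
  have hI4 : (Complex.I) ^ 4 = 1 := by
    rw [show (4 : ℕ) = 2 * 2 from rfl, pow_mul, Complex.I_sq]; norm_num
  have hIk : (Complex.I) ^ k = (Complex.I) ^ (k % 4) := by
    conv_lhs => rw [← Nat.div_add_mod k 4]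
    rw [pow_add, pow_mul, hI4, one_pow, one_mul]
  have hk2 : ((-1 : ℝ)) ^ k = (-1 : ℝ) ^ (k % 2) := by
    conv_lhs => rw [← Nat.div_add_mod k 2]
    rw [pow_add, pow_mul, neg_one_sq, one_pow, one_mul]
  have h24 : k % 2 = k % 4 % 2 := (Nat.mod_mod_of_dvd k (by norm_num)).symm
  rw [hIk, hk2, h24]
  have h4 : k % 4 = 0 ∨ k % 4 = 1 ∨ k % 4 = 2 ∨ k % 4 = 3 := by omega
  rcases h4 with h | h | h | h <;> rw [h] <;> norm_num <;>
    simp [pow_succ, Complex.I_sq] <;> norm_num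

lemma count_formula (n : ℕ) (hn : 1 ≤ n) :
    4 * ((Fintype.card {σ : Finset (Fin n) // σ.card % 4 = 2}) : ℝ)
      = 2 ^ n - 2 * Real.sqrt 2 ^ n * Real.cos (Real.pi * n / 4) := by
  classical
  have hcard : (Fintype.card {σ : Finset (Fin n) // σ.card % 4 = 2} : ℝ)
      = ((Finset.univ.filter (fun σ : Finset (Fin n) => σ.card % 4 = 2)).card : ℝ) := by
    rw [Fintype.card_subtype]
  have hsum : ∑ σ : Finset (Fin n), ((1 : ℝ) + (-1) ^ σ.card - 2 * ((Complex.I) ^ σ.card).re)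
      = 4 * ((Finset.univ.filter (fun σ : Finset (Fin n) => σ.card % 4 = 2)).card : ℝ) := by
    rw [Finset.sum_congr rfl (fun σ _ => pointwise σ.card), Finset.sum_ite, Finset.sum_const,
      Finset.sum_const, smul_zero, add_zero, nsmul_eq_mul, mul_comm]
  have hC : ∑ σ : Finset (Fin n), (Complex.I) ^ σ.card = (Complex.I + 1) ^ n := by
    have h := Finset.prod_add (fun _ : Fin n => Complex.I) (fun _ => (1 : ℂ)) Finset.univ
    calc ∑ σ : Finset (Fin n), (Complex.I) ^ σ.card
        = ∑ t ∈ Finset.univ.powerset,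
            (∏ _i ∈ t, Complex.I) * ∏ _i ∈ Finset.univ \ t, (1 : ℂ) := by
          rw [Finset.powerset_univ]
          exact Finset.sum_congr rfl fun t _ => by
            rw [Finset.prod_const, Finset.prod_const_one, mul_one]
      _ = ∏ _i : Fin n, (Complex.I + 1) := h.symm
      _ = (Complex.I + 1) ^ n := by
          rw [Finset.prod_const, Finset.card_univ, Fintype.card_fin]
  have hR : ∑ σ : Finset (Fin n), ((-1 : ℝ)) ^ σ.card = 0 := by
    have h := Finset.prod_add (fun _ : Fin n => (-1 : ℝ)) (fun _ => (1 : ℝ)) Finset.univ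
    calc ∑ σ : Finset (Fin n), ((-1 : ℝ)) ^ σ.card
        = ∑ t ∈ Finset.univ.powerset,
            (∏ _i ∈ t, (-1 : ℝ)) * ∏ _i ∈ Finset.univ \ t, (1 : ℝ) := by
          rw [Finset.powerset_univ]
          exact Finset.sum_congr rfl fun t _ => by
            rw [Finset.prod_const, Finset.prod_const_one, mul_one]
      _ = ∏ _i : Fin n, ((-1 : ℝ) + 1) := h.symm
      _ = 0 := by
          rw [Finset.prod_const, Finset.card_univ, Fintype.card_fin, neg_add_cancel,
            zero_pow (by omega)]
  have h2n : ∑ σ : Finset (Fin n), (1 : ℝ) = 2 ^ n := by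
    rw [Finset.sum_const, Finset.card_univ, Fintype.card_finset, Fintype.card_fin,
      nsmul_eq_mul, mul_one]
    push_cast
    ring
  have hre : ((Complex.I + 1) ^ n).re = Real.sqrt 2 ^ n * Real.cos (Real.pi * n / 4) := by
    have hsqrt : Real.sqrt 2 * Real.sqrt 2 = 2 := Real.mul_self_sqrt (by norm_num)
    have h1i : (Complex.I + 1)
        = (Real.sqrt 2 : ℝ) * Complex.exp ((Real.pi / 4 : ℝ) * Complex.I) := by
      rw [Complex.exp_mul_I, ← Complex.ofReal_cos, ← Complex.ofReal_sin,
        Real.cos_pi_div_four, Real.sin_pi_div_four]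
      apply Complex.ext <;> simp <;> nlinarith [hsqrt]
    rw [h1i, mul_pow, ← Complex.exp_nat_mul, ← Complex.ofReal_pow]
    have harg : (n : ℂ) * ((Real.pi / 4 : ℝ) * Complex.I)
        = ((Real.pi * n / 4 : ℝ) : ℂ) * Complex.I := by
      push_cast
      ring
    rw [harg, Complex.re_ofReal_mul, Complex.exp_ofReal_mul_I_re]
  rw [hcard, ← hsum, Finset.sum_sub_distrib, Finset.sum_add_distrib, h2n, hR, add_zero,
    ← Finset.mul_sum, ← Complex.re_sum, hC, hre]
  ring


/-- `4 · dim = 2^n - 2·(√2)^n·cos(πn/4)`. -/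
theorem statement2 (p q : ℕ) (hn : 1 ≤ p + q) :
    4 * (Module.finrank ℝ (quatType2 p q) : ℝ) =
      2 ^ (p + q) - 2 * Real.sqrt 2 ^ (p + q) * Real.cos (Real.pi * (p + q) / 4) := by
  rw [Aux.finrank_quat p q]
  rw [show ((p : ℝ) + q) = ((p + q : ℕ) : ℝ) by push_cast; ring]
  exact count_formula (p + q) hn
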